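/- arXiv:2401.14986 — 2 statements merged into one kernel-verified Lean document; each statement's English description precedes it below -/
import Mathlib

section
/- If U(t) solves the Schrödinger equation i·U'(t) = H(t)·U(t) and the pair (H, D) satisfies the brachistochrone equation d/dt(H + D) + i[H, D] = 0, then the generalized angular momentum U(t)† (H(t)+D(t)) U(t) is constant in time. -/
open Matrix
attribute [local instance] Matrix.linftyOpNormedAddCommGroup Matrix.linftyOpNormedSpace
attribute [local instance] Matrix.linftyOpNormedRing Matrix.linftyOpNormedAlgebra

theorem angular_momentum_conserved {n : ℕ}
    (U H D : ℝ → Matrix (Fin n) (Fin n) ℂ)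
    (hUunit : ∀ t, (U t)ᴴ * U t = 1 ∧ U t * (U t)ᴴ = 1)
    (hH : ∀ t, (H t).IsHermitian) (hD : ∀ t, (D t).IsHermitian)
    (hDH : Differentiable ℝ H) (hDD : Differentiable ℝ D)
    (hschrod : ∀ t, HasDerivAt U (-(Complex.I) • (H t * U t)) t)
    (hbrach : ∀ t, HasDerivAt (fun s => H s + D s)
      (-(Complex.I) • (H t * D t - D t * H t)) t) :
    ∀ t : ℝ, (U t)ᴴ * (H t + D t) * U t = (U 0)ᴴ * (H 0 + D 0) * U 0 := by
  have key : ∀ t, HasDerivAt (fun s => (U s)ᴴ * (H s + D s) * U s) 0 t := by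
    intro t
    have hstar : HasDerivAt (fun s => (U s)ᴴ)
        (Complex.I • ((U t)ᴴ * H t)) t := by
      haveI : @ContinuousStar (Matrix (Fin n) (Fin n) ℂ)
        (Matrix.linftyOpNormedAddCommGroup).toUniformSpace.toTopologicalSpace _ :=
        ⟨continuous_id.matrix_conjTranspose⟩
      have h := (hschrod t).star
      refine h.congr_deriv ?_
      simp only [star_smul, star_neg, RCLike.star_def, Complex.conj_I, neg_neg, neg_smul,
        star_eq_conjTranspose, conjTranspose_mul, (hH t).eq]
    have := (hstar.mul (hbrach t)).mul (hschrod t)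
    refine this.congr_deriv ?_
    simp only [Pi.mul_apply]
    simp only [smul_mul_assoc, mul_smul_comm, mul_sub, sub_mul, mul_add, add_mul, smul_sub,
      smul_add, neg_smul, one_smul, neg_neg, mul_assoc, smul_smul, neg_mul, mul_neg, mul_one,
      neg_one_mul]
    abel
  intro t
  exact is_const_of_deriv_eq_zero
    (fun x => (key x).differentiableAt) (fun x => (key x).deriv) t 0
end

section
/- Suppose U(t) is unitary with U(0) = I, solves i·U'(t) = H(t)·U(t), and U(t)†(H(t)+D(t))U(t) = H(0)+D(0) for all t. If additionally U_{-D}(t) is unitary with U_{-D}(0) = I and solves i·U_{-D}'(t) = −D(t)·U_{-D}(t), then U(t) = U_{-D}(t)·exp(−i·(H(0)+D(0))·t) for all t. -/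
open Matrix
attribute [local instance] Matrix.linftyOpNormedAddCommGroup Matrix.linftyOpNormedSpace
attribute [local instance] Matrix.linftyOpNormedRing Matrix.linftyOpNormedAlgebra

theorem unitary_factorization {n : ℕ}
    (U V H D : ℝ → Matrix (Fin n) (Fin n) ℂ)
    (hHcont : Continuous H) (hDcont : Continuous D)
    (hUunit : ∀ t, (U t)ᴴ * U t = 1 ∧ U t * (U t)ᴴ = 1)
    (hVunit : ∀ t, (V t)ᴴ * V t = 1 ∧ V t * (V t)ᴴ = 1)
    (hU0 : U 0 = 1) (hV0 : V 0 = 1)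
    (hUode : ∀ t, HasDerivAt U (-(Complex.I) • (H t * U t)) t)
    (hVode : ∀ t, HasDerivAt V (Complex.I • (D t * V t)) t)
    (hcons : ∀ t, (U t)ᴴ * (H t + D t) * U t = H 0 + D 0) :
    ∀ t : ℝ, U t = V t * NormedSpace.exp ((-(Complex.I * (t : ℂ))) • (H 0 + D 0)) := by
  classical
  set C : Matrix (Fin n) (Fin n) ℂ := H 0 + D 0 with hCdef
  set B : Matrix (Fin n) (Fin n) ℂ := Complex.I • C with hBdef
  -- conjTranspose as a continuous ℝ-linear map
  let cT : Matrix (Fin n) (Fin n) ℂ →L[ℝ] Matrix (Fin n) (Fin n) ℂ :=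
    LinearMap.toContinuousLinearMap
      { toFun := fun M => Mᴴ
        map_add' := fun a b => Matrix.conjTranspose_add a b
        map_smul' := fun r a => by
          simp [Matrix.conjTranspose_smul] }
  have hcT : ∀ M : Matrix (Fin n) (Fin n) ℂ, cT M = Mᴴ := fun M => rfl
  have hVstar : ∀ t, HasDerivAt (fun s => (V s)ᴴ)
      ((-Complex.I) • ((V t)ᴴ * (D t)ᴴ)) t := by
    intro t
    have h := cT.hasFDerivAt.comp_hasDerivAt t (hVode t)
    have : cT (Complex.I • (D t * V t)) = (-Complex.I) • ((V t)ᴴ * (D t)ᴴ) := by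
      rw [hcT, Matrix.conjTranspose_smul, Matrix.conjTranspose_mul]
      simp [Complex.star_def]
    exact h.congr_deriv this
  have hUstar : ∀ t, HasDerivAt (fun s => (U s)ᴴ)
      (Complex.I • ((U t)ᴴ * (H t)ᴴ)) t := by
    intro t
    have h := cT.hasFDerivAt.comp_hasDerivAt t (hUode t)
    have : cT ((-Complex.I) • (H t * U t)) = Complex.I • ((U t)ᴴ * (H t)ᴴ) := by
      rw [hcT, Matrix.conjTranspose_smul, Matrix.conjTranspose_mul]
      simp [Complex.star_def]
    exact h.congr_deriv this
  -- D is Hermitian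
  have hD : ∀ t, (D t)ᴴ = D t := by
    intro t
    have h1 : HasDerivAt (fun s => (V s)ᴴ * V s)
        (((-Complex.I) • ((V t)ᴴ * (D t)ᴴ)) * V t + (V t)ᴴ * (Complex.I • (D t * V t))) t :=
      (hVstar t).mul (hVode t)
    have h2 : HasDerivAt (fun s => (V s)ᴴ * V s) 0 t := by
      have he : (fun s => (V s)ᴴ * V s) = fun _ => (1 : Matrix (Fin n) (Fin n) ℂ) :=
        funext fun s => (hVunit s).1
      rw [he]; exact hasDerivAt_const _ _
    have h3 := h1.unique h2
    have h4 : (V t)ᴴ * (D t)ᴴ * V t = (V t)ᴴ * (D t * V t) := by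
      simp only [neg_mul, smul_mul_assoc, mul_smul_comm, neg_smul] at h3
      have h5 : Complex.I • ((V t)ᴴ * (D t)ᴴ * V t) = Complex.I • ((V t)ᴴ * (D t * V t)) :=
        neg_add_eq_zero.mp h3
      exact smul_right_injective _ Complex.I_ne_zero h5
    have hv := (hVunit t).2
    calc (D t)ᴴ = (V t * (V t)ᴴ) * (D t)ᴴ * (V t * (V t)ᴴ) := by rw [hv, one_mul, mul_one]
      _ = V t * ((V t)ᴴ * (D t)ᴴ * V t) * (V t)ᴴ := by noncomm_ring
      _ = V t * ((V t)ᴴ * (D t * V t)) * (V t)ᴴ := by rw [h4]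
      _ = (V t * (V t)ᴴ) * D t * (V t * (V t)ᴴ) := by noncomm_ring
      _ = D t := by rw [hv, one_mul, mul_one]
  -- conservation law rearranged
  have hflow : ∀ t, (H t + D t) * U t = U t * C := by
    intro t
    calc (H t + D t) * U t = (U t * (U t)ᴴ) * ((H t + D t) * U t) := by
          rw [(hUunit t).2, one_mul]
      _ = U t * ((U t)ᴴ * (H t + D t) * U t) := by noncomm_ring
      _ = U t * C := by rw [hcons t]
  -- derivative of Vᴴ U
  have hW : ∀ t, HasDerivAt (fun s => (V s)ᴴ * U s)
      ((-Complex.I) • ((V t)ᴴ * U t * C)) t := by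
    intro t
    have h := (hVstar t).mul (hUode t)
    have he : ((-Complex.I) • ((V t)ᴴ * (D t)ᴴ)) * U t + (V t)ᴴ * ((-Complex.I) • (H t * U t))
        = (-Complex.I) • ((V t)ᴴ * U t * C) := by
      rw [hD t, smul_mul_assoc, mul_smul_comm, ← smul_add]
      congr 1
      calc (V t)ᴴ * D t * U t + (V t)ᴴ * (H t * U t) = (V t)ᴴ * ((H t + D t) * U t) := by
            noncomm_ring
        _ = (V t)ᴴ * (U t * C) := by rw [hflow t]
        _ = (V t)ᴴ * U t * C := by rw [mul_assoc]
    rw [he] at h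
    exact h
  have hE : ∀ t : ℝ, HasDerivAt (fun s : ℝ => NormedSpace.exp (s • B))
      (NormedSpace.exp (t • B) * B) t := fun t => hasDerivAt_exp_smul_const B t
  have hcomm : ∀ t : ℝ, C * NormedSpace.exp (t • B) = NormedSpace.exp (t • B) * C := by
    intro t
    exact ((((Commute.refl C).smul_right Complex.I).smul_right t).exp_right).eq
  -- the invariant g
  set g : ℝ → Matrix (Fin n) (Fin n) ℂ :=
    fun s => (V s)ᴴ * U s * NormedSpace.exp (s • B) with hgdef
  have hg : ∀ t, HasDerivAt g 0 t := by
    intro t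
    have h := (hW t).mul (hE t)
    have he : ((-Complex.I) • ((V t)ᴴ * U t * C)) * NormedSpace.exp (t • B)
        + (V t)ᴴ * U t * (NormedSpace.exp (t • B) * B) = 0 := by
      rw [hBdef, mul_smul_comm, mul_smul_comm, smul_mul_assoc, ← hcomm t, neg_smul,
        ← mul_assoc, neg_add_cancel]
    rw [he] at h
    exact h
  have hgconst : ∀ t, g t = g 0 := by
    intro t
    exact is_const_of_deriv_eq_zero (fun s => (hg s).differentiableAt)
      (fun s => (hg s).deriv) t 0
  have hg0 : g 0 = 1 := by
    simp [hgdef, hV0, hU0, NormedSpace.exp_zero]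
  -- finish
  intro t
  have hgt : (V t)ᴴ * U t * NormedSpace.exp (t • B) = 1 := by
    rw [← hg0]; exact hgconst t
  have hinv : NormedSpace.exp (t • B) * NormedSpace.exp (-(t • B)) = 1 := by
    erw [← NormedSpace.exp_add_of_commute ((Commute.refl (t • B)).neg_right),
      add_neg_cancel, NormedSpace.exp_zero]
  have h5 : (V t)ᴴ * U t = NormedSpace.exp (-(t • B)) := by
    have := congrArg (fun M => M * NormedSpace.exp (-(t • B))) hgt
    simpa [mul_assoc, hinv] using this
  have h6 : U t = V t * NormedSpace.exp (-(t • B)) := by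
    calc U t = (V t * (V t)ᴴ) * U t := by rw [(hVunit t).2, one_mul]
      _ = V t * ((V t)ᴴ * U t) := by rw [mul_assoc]
      _ = V t * NormedSpace.exp (-(t • B)) := by rw [h5]
  rw [h6]
  congr 1
  congr 1
  rw [hBdef]
  rw [← smul_assoc]
  simp [neg_smul, mul_comm]
end
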